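/- Let {a, b, c, d} be a Diophantine quadruple with D(-1) in the ring of integers O_K of an imaginary quadratic field, with 10 ≤ |a| ≤ |b| ≤ |c| ≤ |d|, and suppose {a, b, d} is not regular. Define c± = a + b + d - 2abd ± 2rxy where r² = ab - 1, x² = ad - 1, y² = bd - 1. Then c₊·c₋ = a² + b² + d² - 2ab - 2ad - 2bd + 4 and both c₊ and c₋ are nonzero. -/

import Mathlib

/-- For a Diophantine quadruple {a,b,c,d} with D(-1), 10 ≤ |a| ≤ |b| ≤ |c| ≤ |d|,
with {a,b,d} not regular, and r² = ab-1, x² = ad-1, y² = bd-1, the elements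
c± = a + b + d - 2abd ± 2rxy satisfy
c₊c₋ = a² + b² + d² - 2ab - 2ad - 2bd + 4 and c₊ ≠ 0 ≠ c₋. -/
theorem stmt_16 (K : Subfield ℂ)
    (hdeg : Module.finrank ℚ K = 2) (him : ∃ z : K, (z : ℂ).im ≠ 0)
    (a b c d r x y : K)
    (haint : IsIntegral ℤ a) (hbint : IsIntegral ℤ b)
    (hcint : IsIntegral ℤ c) (hdint : IsIntegral ℤ d)
    (hrint : IsIntegral ℤ r) (hxint : IsIntegral ℤ x) (hyint : IsIntegral ℤ y)
    (ha0 : a ≠ 0) (hb0 : b ≠ 0) (hc0 : c ≠ 0) (hd0 : d ≠ 0)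
    (hab : a ≠ b) (hac : a ≠ c) (had : a ≠ d)
    (hbc : b ≠ c) (hbd : b ≠ d) (hcd : c ≠ d)
    (hsq : ∀ u v : K, u ∈ ({a, b, c, d} : Set K) → v ∈ ({a, b, c, d} : Set K) →
      u ≠ v → ∃ w : K, IsIntegral ℤ w ∧ u * v - 1 = w ^ 2)
    (h10 : 10 ≤ ‖(a : ℂ)‖)
    (hab' : ‖(a : ℂ)‖ ≤ ‖(b : ℂ)‖)
    (hbc' : ‖(b : ℂ)‖ ≤ ‖(c : ℂ)‖)
    (hcd' : ‖(c : ℂ)‖ ≤ ‖(d : ℂ)‖)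
    (hr : r ^ 2 = a * b - 1) (hx : x ^ 2 = a * d - 1) (hy : y ^ 2 = b * d - 1)
    (hnreg : d ≠ a + b + 2 * r ∧ d ≠ a + b - 2 * r) :
    (a + b + d - 2 * a * b * d + 2 * r * x * y) *
        (a + b + d - 2 * a * b * d - 2 * r * x * y) =
      a ^ 2 + b ^ 2 + d ^ 2 - 2 * a * b - 2 * a * d - 2 * b * d + 4 ∧
    a + b + d - 2 * a * b * d + 2 * r * x * y ≠ 0 ∧
    a + b + d - 2 * a * b * d - 2 * r * x * y ≠ 0 := by
  have hprod : (a + b + d - 2 * a * b * d + 2 * r * x * y) *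
      (a + b + d - 2 * a * b * d - 2 * r * x * y) =
      a ^ 2 + b ^ 2 + d ^ 2 - 2 * a * b - 2 * a * d - 2 * b * d + 4 := by
    have h : (a + b + d - 2 * a * b * d + 2 * r * x * y) *
        (a + b + d - 2 * a * b * d - 2 * r * x * y) =
        (a + b + d - 2 * a * b * d) ^ 2 - 4 * (r ^ 2 * (x ^ 2 * y ^ 2)) := by ring
    rw [h, hr, hx, hy]; ring
  have hfac : a ^ 2 + b ^ 2 + d ^ 2 - 2 * a * b - 2 * a * d - 2 * b * d + 4 =
      (d - (a + b + 2 * r)) * (d - (a + b - 2 * r)) := by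
    have h : (d - (a + b + 2 * r)) * (d - (a + b - 2 * r)) =
        (d - a - b) ^ 2 - 4 * r ^ 2 := by ring
    rw [h, hr]; ring
  have hne : a ^ 2 + b ^ 2 + d ^ 2 - 2 * a * b - 2 * a * d - 2 * b * d + 4 ≠ 0 := by
    rw [hfac]
    exact mul_ne_zero (sub_ne_zero.mpr hnreg.1) (sub_ne_zero.mpr hnreg.2)
  refine ⟨hprod, ?_, ?_⟩
  · intro h0
    apply hne; rw [← hprod, h0, zero_mul]
  · intro h0
    apply hne; rw [← hprod, h0, mul_zero]
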